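/- Let G act cocompactly on a connected graph K with finite edge stabilizers, and let K' be obtained from K by G-removal of all translates of a single edge, or by G-removal of all translates of a finite-valence vertex together with its incident edges. Then: (1) if K' is connected, the inclusion K' ⊆ K is a quasi-isometry, so K' is hyperbolic whenever K is; and (2) if K is fine, then K' is fine. -/

import Mathlib

open SimpleGraph

universe u v

variable {V : Type u} {G : Type v}

/-- A graph is fine if each edge lies in only finitely many circuits (embedded
cycles) of length `n`, for every `n`. -/
def Fine (K : SimpleGraph V) : Prop :=
  ∀ (n : ℕ) (u w : V), K.Adj u w →
    {c : K.Walk u u | c.IsCycle ∧ c.length = n ∧ s(u, w) ∈ c.edges}.Finite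

/-- An action of `G` by permutations of `V` preserves the graph `K`. -/
def ActsOn [Group G] (φ : G →* Equiv.Perm V) (K : SimpleGraph V) : Prop :=
  ∀ (g : G) (u w : V), K.Adj u w → K.Adj (φ g u) (φ g w)

/-- The stabilizer of a vertex. -/
def stab [Group G] (φ : G →* Equiv.Perm V) (x : V) : Subgroup G where
  carrier := {g | φ g x = x}
  one_mem' := by simp
  mul_mem' := by
    intro a b ha hb
    simp only [Set.mem_setOf_eq, map_mul, Equiv.Perm.mul_apply] at *
    rw [hb, ha]
  inv_mem' := by
    intro a ha
    simp only [Set.mem_setOf_eq, map_inv] at *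
    conv_lhs => rw [← ha]
    simp

/-- The conjugate subgroup `g P g⁻¹`. -/
def conjSub [Group G] (g : G) (P : Subgroup G) : Subgroup G :=
  Subgroup.map (MulAut.conj g).toMonoidHom P

/-- All edge stabilizers are finite (we use pointwise stabilizers of the two
endpoints; the actions considered are without inversions). -/
def FiniteEdgeStabs [Group G] (φ : G →* Equiv.Perm V) (K : SimpleGraph V) : Prop :=
  ∀ u w : V, K.Adj u w → ((stab φ u ⊓ stab φ w : Subgroup G) : Set G).Finite

/-- There are finitely many `G`-orbits of edges. -/
def FinEdgeOrbits [Group G] (φ : G →* Equiv.Perm V) (K : SimpleGraph V) : Prop :=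
  ∃ F : Set (V × V), F.Finite ∧
    ∀ u w : V, K.Adj u w → ∃ g : G, ∃ p ∈ F, φ g p.1 = u ∧ φ g p.2 = w

/-- Gromov hyperbolicity of the path metric of a graph (four point condition). -/
def Hyperbolic (K : SimpleGraph V) : Prop :=
  ∃ δ : ℝ, ∀ x y z t : V,
    (K.dist x y : ℝ) + (K.dist z t : ℝ) ≤
      max ((K.dist x z : ℝ) + (K.dist y t : ℝ)) ((K.dist x t : ℝ) + (K.dist y z : ℝ)) + δ

/-- `K` is a `(G, P)`-graph witnessing that `G` is hyperbolic relative to the finite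
collection `Ps` of subgroups: `K` is a connected fine hyperbolic graph, `G` acts
on it without inversions with finite edge stabilizers and finitely many orbits of
edges, and `Ps` is a set of representatives of the distinct conjugacy classes of
vertex stabilizers, with every infinite vertex stabilizer represented. -/
structure IsGPGraph [Group G] (φ : G →* Equiv.Perm V) (Ps : Set (Subgroup G))
    (K : SimpleGraph V) : Prop where
  finP : Ps.Finite
  conn : K.Connected
  fine : Fine K
  hyp : Hyperbolic K
  acts : ActsOn φ K
  noInv : ∀ (g : G) (u w : V), K.Adj u w → φ g u = w → φ g w ≠ u
  finStabs : FiniteEdgeStabs φ K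
  finOrbits : FinEdgeOrbits φ K
  parab : ∀ x : V, ¬ ((stab φ x : Set G)).Finite →
    ∃ P ∈ Ps, ∃ g : G, stab φ x = conjSub g P
  reps : ∀ P ∈ Ps, ∃ x : V, stab φ x = P
  distinct : ∀ P ∈ Ps, ∀ Q ∈ Ps, (∃ g : G, conjSub g P = Q) → P = Q

/-- The graph homomorphism induced by the action of `g`. -/
def actHom [Group G] {φ : G →* Equiv.Perm V} {J : SimpleGraph V}
    (h : ActsOn φ J) (g : G) : J →g J where
  toFun := φ g
  map_rel' := fun hadj => h g _ _ hadj

/-- A subgraph is invariant under the action. -/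
def InvSubgraph [Group G] (φ : G →* Equiv.Perm V) {J : SimpleGraph V}
    (K : J.Subgraph) : Prop :=
  ∀ g : G, (∀ x ∈ K.verts, φ g x ∈ K.verts) ∧
    ∀ u w : V, K.Adj u w → K.Adj (φ g u) (φ g w)

/-- The inclusion of the subgraph `K` into the subgraph `K'` (with `K ≤ K'`) is
a quasi-isometry for the combinatorial path metrics. -/
def QISubIncl {J : SimpleGraph V} (K K' : J.Subgraph) (h : K ≤ K') : Prop :=
  ∃ l e : ℝ, 1 ≤ l ∧ 0 ≤ e ∧
    (∀ u w : K.verts,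
      (K'.coe.dist ⟨u.1, Set.mem_of_mem_of_subset u.2 (SimpleGraph.Subgraph.verts_mono h)⟩
          ⟨w.1, Set.mem_of_mem_of_subset w.2 (SimpleGraph.Subgraph.verts_mono h)⟩ : ℝ)
        ≤ l * (K.coe.dist u w : ℝ) + e ∧
      (K.coe.dist u w : ℝ)
        ≤ l * (K'.coe.dist ⟨u.1, Set.mem_of_mem_of_subset u.2 (SimpleGraph.Subgraph.verts_mono h)⟩
            ⟨w.1, Set.mem_of_mem_of_subset w.2 (SimpleGraph.Subgraph.verts_mono h)⟩ : ℝ) + e) ∧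
    (∀ x : K'.verts, ∃ u : K.verts,
      (K'.coe.dist x ⟨u.1, Set.mem_of_mem_of_subset u.2 (SimpleGraph.Subgraph.verts_mono h)⟩ : ℝ) ≤ e)

/-- There are finitely many `G`-orbits of vertices. -/
def FinVertOrbits [Group G] (φ : G →* Equiv.Perm V) : Prop :=
  ∃ F : Set V, F.Finite ∧ ∀ v : V, ∃ g : G, ∃ x ∈ F, φ g x = v


namespace RemAux

variable {V : Type*} {W : Type*}

lemma getVert_mem_support {X : SimpleGraph V} {a b : V} (p : X.Walk a b) (i : ℕ) :
    p.getVert i ∈ p.support := by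
  rcases le_or_gt i p.length with h | h
  · exact Walk.mem_support_iff_exists_getVert.mpr ⟨i, rfl, h⟩
  · rw [p.getVert_of_length_le h.le]; exact Walk.end_mem_support p

lemma exists_subwalk {X : SimpleGraph V} {a b : V} (p : X.Walk a b) :
    ∀ i j : ℕ, i ≤ j → j ≤ p.length →
      ∃ q : X.Walk (p.getVert i) (p.getVert j), q.length = j - i ∧
        ∀ x ∈ q.support, x ∈ p.support := by
  induction p with
  | nil =>
    intro i j hij hj
    simp only [Walk.length_nil, Nat.le_zero] at hj
    subst hj
    have hi : i = 0 := Nat.le_zero.mp hij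
    subst hi
    exact ⟨Walk.nil, by simp, by simp⟩
  | @cons u uc ub hadj q ih =>
    intro i j hij hj
    match i, j with
    | 0, 0 =>
      refine ⟨Walk.nil.copy (Walk.getVert_zero _).symm (Walk.getVert_zero _).symm, by simp, ?_⟩
      intro z hz
      rw [Walk.support_copy] at hz
      simp only [Walk.support_nil, List.mem_singleton] at hz
      rw [hz]
      exact Walk.start_mem_support _
    | 0, (j' + 1) =>
      obtain ⟨q₀, hq₀l, hq₀s⟩ := ih 0 j' (Nat.zero_le _) (by simpa [Nat.succ_le_succ_iff] using hj)
      refine ⟨(Walk.cons hadj (q₀.copy (Walk.getVert_zero _) (Walk.getVert_cons_succ ..).symm)).copy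
        (Walk.getVert_zero _).symm rfl, ?_, ?_⟩
      · rw [Walk.length_copy, Walk.length_cons, Walk.length_copy, hq₀l]; omega
      · intro z hz
        rw [Walk.support_copy, Walk.support_cons] at hz
        rw [Walk.support_cons]
        rcases List.mem_cons.mp hz with rfl | hz'
        · exact List.mem_cons_self
        · rw [Walk.support_copy] at hz'
          exact List.mem_cons_of_mem _ (hq₀s z hz')
    | (i' + 1), (j' + 1) =>
      obtain ⟨q₀, hq₀l, hq₀s⟩ := ih i' j' (by omega) (by simpa [Nat.succ_le_succ_iff] using hj)
      refine ⟨q₀.copy (Walk.getVert_cons_succ ..).symm (Walk.getVert_cons_succ ..).symm, by simpa using hq₀l, ?_⟩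
      intro z hz
      rw [Walk.support_copy] at hz
      rw [Walk.support_cons]
      exact List.mem_cons_of_mem _ (hq₀s z hz)
    | (i' + 1), 0 => omega

lemma dist_getVert_le {X : SimpleGraph V} {a b : V} (p : X.Walk a b) {i j : ℕ}
    (hij : i ≤ j) (hj : j ≤ p.length) :
    X.dist (p.getVert i) (p.getVert j) ≤ j - i := by
  obtain ⟨q, hql, -⟩ := exists_subwalk p i j hij hj
  exact hql ▸ SimpleGraph.dist_le q

lemma reach_getVert {X : SimpleGraph V} {a b : V} (p : X.Walk a b) (i : ℕ) :
    X.Reachable a (p.getVert i) := by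
  rcases le_or_gt i p.length with h | h
  · obtain ⟨q, -, -⟩ := exists_subwalk p 0 i (Nat.zero_le _) h
    exact ⟨q.copy (Walk.getVert_zero _) rfl⟩
  · rw [p.getVert_of_length_le h.le]; exact ⟨p⟩

lemma geo_getVert {X : SimpleGraph V} {a b : V} {p : X.Walk a b}
    (hp : p.length = X.dist a b) {i j : ℕ} (hij : i ≤ j) (hj : j ≤ p.length) :
    X.dist (p.getVert i) (p.getVert j) = j - i := by
  refine le_antisymm (dist_getVert_le p hij hj) ?_
  obtain ⟨w1, hw1l, -⟩ := exists_subwalk p 0 i (Nat.zero_le _) (hij.trans hj)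
  obtain ⟨w3, hw3l, -⟩ := exists_subwalk p j p.length hj (le_refl _)
  obtain ⟨w2, -, -⟩ := exists_subwalk p i j hij hj
  obtain ⟨q2, hq2⟩ := SimpleGraph.Reachable.exists_walk_length_eq_dist ⟨w2⟩
  have key : X.dist a b ≤ w1.length + (q2.length + w3.length) := by
    have := SimpleGraph.dist_le
      (((w1.copy (Walk.getVert_zero _) rfl).append (q2.append
        (w3.copy rfl (Walk.getVert_length _)))))
    simpa [Walk.length_append] using this
  rw [hw1l, hq2, hw3l] at key
  omega

lemma getVert_map {X : SimpleGraph V} {Y : SimpleGraph W} (f : X →g Y) {a b : V}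
    (p : X.Walk a b) : ∀ i, (p.map f).getVert i = f (p.getVert i) := by
  induction p with
  | nil => intro i; simp [Walk.getVert]
  | cons h q ih =>
    intro i
    cases i with
    | zero => simp
    | succ n => simpa [Walk.getVert_cons_succ] using ih n

lemma dist_adj_le_one {X : SimpleGraph V} {a b : V} (h : X.Adj a b) : X.dist a b ≤ 1 := by
  simpa using SimpleGraph.dist_le (Walk.cons h Walk.nil)

/-- doubled Gromov product -/
noncomputable def ee (X : SimpleGraph V) (x y w : V) : ℤ :=
  (X.dist x w : ℤ) + (X.dist y w : ℤ) - (X.dist x y : ℤ)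

section Core

variable {X : SimpleGraph V} {δ : ℕ}

/-- the integer four point condition -/
def FourPt (X : SimpleGraph V) (δ : ℕ) : Prop :=
  ∀ x y z t : V, (X.dist x y : ℤ) + (X.dist z t : ℤ) ≤
    max ((X.dist x z : ℤ) + (X.dist y t : ℤ)) ((X.dist x t : ℤ) + (X.dist y z : ℤ)) + δ

lemma gp (h4 : FourPt X δ) (x y z w : V) :
    min (ee X x y w) (ee X y z w) ≤ ee X x z w + δ := by
  have h := h4 x z y w
  have c1 : X.dist z w = X.dist w z := SimpleGraph.dist_comm
  have c2 : X.dist y w = X.dist w y := SimpleGraph.dist_comm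
  have c3 : X.dist z y = X.dist y z := SimpleGraph.dist_comm
  rcases max_cases ((X.dist x y : ℤ) + (X.dist z w : ℤ))
      ((X.dist x w : ℤ) + (X.dist z y : ℤ)) with ⟨hm, -⟩ | ⟨hm, -⟩ <;> rw [hm] at h
  · refine le_trans (min_le_left _ _) ?_
    simp only [ee]; push_cast at h ⊢; omega
  · refine le_trans (min_le_right _ _) ?_
    simp only [ee]; rw [c3] at h; push_cast at h ⊢; omega

lemma chain (h4 : FourPt X δ) (w : V) :
    ∀ (k n : ℕ) (v : ℕ → V), 1 ≤ n → n ≤ 2 ^ k →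
      ∃ i, i < n ∧ ee X (v i) (v (i + 1)) w - (k : ℤ) * δ ≤ ee X (v 0) (v n) w := by
  intro k
  induction k with
  | zero =>
    intro n v h1 h2
    have : n = 1 := by simpa using le_antisymm h2 h1
    subst this
    exact ⟨0, Nat.zero_lt_one, by simp⟩
  | succ k ih =>
    intro n v h1 h2
    rcases le_or_gt n (2 ^ k) with hn | hn
    · obtain ⟨i, hi, hle⟩ := ih n v h1 hn
      refine ⟨i, hi, le_trans ?_ hle⟩
      have : (0 : ℤ) ≤ δ := Int.natCast_nonneg δ
      push_cast
      nlinarith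
    · set m := n / 2 with hm
      have hm1 : 1 ≤ m := by
        have : 2 ≤ n := by
          have : 1 ≤ 2 ^ k := Nat.one_le_two_pow
          omega
        omega
      have hmn : m < n := by omega
      have hmk : m ≤ 2 ^ k := by
        have : n ≤ 2 * 2 ^ k := by
          have := h2; rw [pow_succ] at this; omega
        omega
      have hnm : n - m ≤ 2 ^ k := by
        have : n ≤ 2 * 2 ^ k := by
          have := h2; rw [pow_succ] at this; omega
        omega
      have hgp := gp h4 (v 0) (v m) (v n) w
      obtain ⟨i1, hi1, hle1⟩ := ih m v hm1 hmk
      obtain ⟨i2, hi2, hle2⟩ := ih (n - m) (fun t => v (m + t)) (by omega) hnm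
      have hv0 : (fun t => v (m + t)) 0 = v m := by simp
      have hvn : m + (n - m) = n := by omega
      rcases min_cases (ee X (v 0) (v m) w) (ee X (v m) (v n) w) with ⟨hmin, -⟩ | ⟨hmin, -⟩ <;>
        rw [hmin] at hgp
      · refine ⟨i1, by omega, ?_⟩
        have : (k : ℤ) * δ + δ ≤ ((k : ℤ) + 1) * δ := by ring_nf; omega
        push_cast
        linarith
      · refine ⟨m + i2, by omega, ?_⟩
        simp only [hv0] at hle2
        rw [hvn] at hle2
        have : ee X (v (m + i2)) (v (m + i2 + 1)) w = ee X (v (m + i2)) (v (m + (i2 + 1))) w := by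
          rw [Nat.add_assoc]
        rw [this]
        push_cast
        linarith

lemma avoid (h4 : FourPt X δ) {x y : V} (p : X.Walk x y) (w : V) (r k : ℕ)
    (h1 : 1 ≤ p.length) (hk : p.length ≤ 2 ^ k)
    (hfar : ∀ u ∈ p.support, (r : ℕ) ≤ X.dist w u) :
    (2 * r : ℤ) ≤ ee X x y w + (k : ℤ) * δ + 1 := by
  obtain ⟨i, hi, hle⟩ := chain h4 w k p.length p.getVert h1 hk
  rw [p.getVert_zero, p.getVert_length] at hle
  have hadj : X.Adj (p.getVert i) (p.getVert (i + 1)) := p.adj_getVert_succ hi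
  have hd : X.dist (p.getVert i) (p.getVert (i + 1)) ≤ 1 := dist_adj_le_one hadj
  have hf1 : (r : ℕ) ≤ X.dist w (p.getVert i) := hfar _ (getVert_mem_support p i)
  have hf2 : (r : ℕ) ≤ X.dist w (p.getVert (i + 1)) := hfar _ (getVert_mem_support p (i + 1))
  have c1 : X.dist (p.getVert i) w = X.dist w (p.getVert i) := SimpleGraph.dist_comm
  have c2 : X.dist (p.getVert (i + 1)) w = X.dist w (p.getVert (i + 1)) := SimpleGraph.dist_comm
  have : (2 * r : ℤ) - 1 ≤ ee X (p.getVert i) (p.getVert (i + 1)) w := by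
    simp only [ee]; rw [c1, c2]; push_cast; omega
  linarith

lemma distGeo (h4 : FourPt X δ) (hc : X.Connected) {x y : V} {p : X.Walk x y}
    (hp : p.length = X.dist x y) (w : V) :
    ∃ m ∈ p.support, (2 * (X.dist w m) : ℤ) ≤ ee X x y w + 2 * δ + 1 := by
  have t1 : X.dist y w ≤ X.dist y x + X.dist x w := hc.dist_triangle
  have t2 : X.dist x w ≤ X.dist x y + X.dist y w := hc.dist_triangle
  have cyx : X.dist y x = X.dist x y := SimpleGraph.dist_comm
  rw [cyx] at t1
  set i := (X.dist x w + p.length - X.dist y w) / 2 with hidef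
  have hi : i ≤ p.length := by omega
  refine ⟨p.getVert i, getVert_mem_support p i, ?_⟩
  have h1 : X.dist x (p.getVert i) = i := by
    have := geo_getVert hp (Nat.zero_le i) hi
    rwa [Walk.getVert_zero, Nat.sub_zero] at this
  have h2 : X.dist (p.getVert i) y = p.length - i := by
    have := geo_getVert hp hi (le_refl p.length)
    rwa [Walk.getVert_length] at this
  have h := h4 w (p.getVert i) x y
  have c1 : X.dist w x = X.dist x w := SimpleGraph.dist_comm
  have c2 : X.dist w y = X.dist y w := SimpleGraph.dist_comm
  have c3 : X.dist (p.getVert i) x = i := by rw [SimpleGraph.dist_comm]; exact h1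
  rw [c1, c2, c3, h2] at h
  simp only [ee]
  rcases max_cases ((X.dist x w : ℤ) + ((p.length - i : ℕ) : ℤ)) ((X.dist y w : ℤ) + (i : ℤ))
    with ⟨hm, -⟩ | ⟨hm, -⟩ <;> rw [hm] at h <;> omega

lemma slimX (h4 : FourPt X δ) (hc : X.Connected) {x y z : V}
    {pxy : X.Walk x y} {pyz : X.Walk y z} {pxz : X.Walk x z}
    (hxy : pxy.length = X.dist x y) (hyz : pyz.length = X.dist y z)
    (hxz : pxz.length = X.dist x z) :
    ∀ m ∈ pxz.support, ∃ m', (m' ∈ pxy.support ∨ m' ∈ pyz.support) ∧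
      X.dist m m' ≤ 2 * δ + 1 := by
  intro m hm
  obtain ⟨i, hgv, hi⟩ := Walk.mem_support_iff_exists_getVert.mp hm
  have h1 : X.dist x m = i := by
    have := geo_getVert hxz (Nat.zero_le i) hi
    rwa [Walk.getVert_zero, Nat.sub_zero, hgv] at this
  have h2 : X.dist m z = pxz.length - i := by
    have := geo_getVert hxz hi (le_refl pxz.length)
    rwa [Walk.getVert_length, hgv] at this
  have he0 : ee X x z m = 0 := by
    simp only [ee]
    have c1 : X.dist x m = X.dist x m := rfl
    have c2 : X.dist z m = X.dist m z := SimpleGraph.dist_comm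
    rw [c2, h1, h2]
    omega
  have hgp := gp h4 x y z m
  rw [he0] at hgp
  rcases min_cases (ee X x y m) (ee X y z m) with ⟨hmin, -⟩ | ⟨hmin, -⟩ <;> rw [hmin] at hgp
  · obtain ⟨m', hm', hd⟩ := distGeo h4 hc hxy m
    refine ⟨m', Or.inl hm', ?_⟩
    omega
  · obtain ⟨m', hm', hd⟩ := distGeo h4 hc hyz m
    refine ⟨m', Or.inr hm', ?_⟩
    omega

lemma sq_le_two_pow : ∀ n : ℕ, 4 ≤ n → n * n ≤ 2 ^ n := by
  intro n hn
  induction n with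
  | zero => omega
  | succ m ih =>
    rcases Nat.lt_or_ge m 4 with h | h
    · have : m = 3 := by omega
      subst this
      norm_num
    · have h2 := ih (by omega)
      rw [pow_succ]
      nlinarith

/-- Morse constant -/
def D0 (C δ : ℕ) : ℕ := 8 * C * δ * δ + 8 * C * δ + 8 * C + 8 * δ + 17

def D1 (C δ : ℕ) : ℕ := D0 C δ + C * (2 * D0 C δ + 1)

lemma morse_arith {C δ D : ℕ} (hC : 1 ≤ C) (hD : 1 ≤ D)
    (h : 2 * D ≤ δ * (Nat.log 2 (8 * C * D) + 1) + 1) : D ≤ D0 C δ := by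
  set l := Nat.log 2 (8 * C * D) with hl
  rcases Nat.lt_or_ge l 5 with hl5 | hl5
  · have h5 : δ * (l + 1) ≤ δ * 5 := Nat.mul_le_mul_left δ (by omega)
    have hCδ : δ ≤ C * δ := Nat.le_mul_of_pos_left δ (by omega)
    simp only [D0]
    omega
  · have hpow : 2 ^ l ≤ 8 * C * D := Nat.pow_log_le_self 2 (by positivity)
    have hsq : l * l ≤ 2 ^ l := sq_le_two_pow l (by omega)
    have hll : l * l ≤ 8 * C * D := le_trans hsq hpow
    have h2 : l * l ≤ 4 * C * (δ * l + δ + 1) := by nlinarith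
    have h5 : δ * l + δ + 1 ≤ 2 * (δ * l) + l := by
      have hδ : δ ≤ δ * l := by
        calc δ = δ * 1 := (mul_one δ).symm
        _ ≤ δ * l := Nat.mul_le_mul_left δ (by omega)
      have h1 : 1 ≤ l := by omega
      linarith
    have h3 : l * l ≤ (8 * C * δ + 4 * C) * l := by
      calc l * l ≤ 4 * C * (δ * l + δ + 1) := h2
      _ ≤ 4 * C * (2 * (δ * l) + l) := Nat.mul_le_mul_left _ h5
      _ = (8 * C * δ + 4 * C) * l := by ring
    have h4 : l ≤ 8 * C * δ + 4 * C := Nat.le_of_mul_le_mul_right h3 (by omega)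
    have h6 : δ * (l + 1) ≤ δ * (8 * C * δ + 4 * C + 1) := Nat.mul_le_mul_left δ (by omega)
    have hexp : δ * (8 * C * δ + 4 * C + 1) = 8 * C * δ * δ + 4 * C * δ + δ := by ring
    simp only [D0]
    linarith

lemma morse1 (h4 : FourPt X δ) (hc : X.Connected) (C : ℕ) (hC : 1 ≤ C) {a b : V}
    (p : X.Walk a b)
    (hidx : ∀ i j, i ≤ j → j ≤ p.length →
      (j - i : ℕ) ≤ C * X.dist (p.getVert i) (p.getVert j))
    {γ : X.Walk a b} (hγ : γ.length = X.dist a b) :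
    ∀ m ∈ γ.support, ∃ u ∈ p.support, X.dist m u ≤ D0 C δ := by
  classical
  have hpne : p.support.toFinset.Nonempty :=
    ⟨a, List.mem_toFinset.mpr p.start_mem_support⟩
  set h : V → ℕ := fun m => ((p.support.toFinset.image (X.dist m)).min'
    (hpne.image _)) with hdefh
  have hrealize : ∀ m : V, ∃ u ∈ p.support, X.dist m u = h m := by
    intro m
    have := Finset.min'_mem (p.support.toFinset.image (X.dist m)) (hpne.image _)
    rw [Finset.mem_image] at this
    obtain ⟨u, hu, hdist⟩ := this
    exact ⟨u, List.mem_toFinset.mp hu, hdist⟩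
  have hminle : ∀ m u, u ∈ p.support → h m ≤ X.dist m u := by
    intro m u hu
    exact Finset.min'_le _ _ (Finset.mem_image_of_mem _ (List.mem_toFinset.mpr hu))
  have hγne : γ.support.toFinset.Nonempty :=
    ⟨a, List.mem_toFinset.mpr γ.start_mem_support⟩
  set D := ((γ.support.toFinset.image h).max' (hγne.image _)) with hdefD
  have hDub : ∀ m ∈ γ.support, h m ≤ D := by
    intro m hm
    exact Finset.le_max' _ _ (Finset.mem_image_of_mem _ (List.mem_toFinset.mpr hm))
  suffices hDD : D ≤ D0 C δ by
    intro m hm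
    obtain ⟨u, hu, hd⟩ := hrealize m
    exact ⟨u, hu, by have := hDub m hm; omega⟩
  rcases Nat.eq_zero_or_pos D with hD0 | hD1
  · omega
  obtain ⟨w0, hw0γ, hw0⟩ : ∃ w ∈ γ.support, h w = D := by
    have := Finset.max'_mem (γ.support.toFinset.image h) (hγne.image _)
    rw [Finset.mem_image] at this
    obtain ⟨w, hw, hd⟩ := this
    exact ⟨w, List.mem_toFinset.mp hw, hd⟩
  obtain ⟨i₀, hgv0, hi₀⟩ := Walk.mem_support_iff_exists_getVert.mp hw0γ
  set i₁ := i₀ - 2 * D with hi1def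
  set i₂ := min (i₀ + 2 * D) γ.length with hi2def
  have hi₁₀ : i₁ ≤ i₀ := by omega
  have hi₀₂ : i₀ ≤ i₂ := by omega
  have hi₂ : i₂ ≤ γ.length := by omega
  set wm := γ.getVert i₁ with hwmdef
  set wp := γ.getVert i₂ with hwpdef
  have hd10 : X.dist wm w0 = i₀ - i₁ := by
    have := geo_getVert hγ hi₁₀ (le_trans hi₀₂ hi₂)
    rwa [hgv0] at this
  have hd02 : X.dist w0 wp = i₂ - i₀ := by
    have := geo_getVert hγ hi₀₂ hi₂
    rwa [hgv0] at this
  have hd12 : X.dist wm wp = i₂ - i₁ := geo_getVert hγ (le_trans hi₁₀ hi₀₂) hi₂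
  obtain ⟨a', ha'p, ha'd⟩ := hrealize wm
  obtain ⟨b', hb'p, hb'd⟩ := hrealize wp
  have ha'D : X.dist wm a' ≤ D := by
    rw [ha'd]; exact hDub _ (getVert_mem_support γ i₁)
  have hb'D : X.dist wp b' ≤ D := by
    rw [hb'd]; exact hDub _ (getVert_mem_support γ i₂)
  obtain ⟨g1, hg1⟩ := hc.exists_walk_length_eq_dist wm a'
  obtain ⟨g2, hg2⟩ := hc.exists_walk_length_eq_dist b' wp
  have hmid : ∃ mid : X.Walk a' b', (∀ x ∈ mid.support, x ∈ p.support) ∧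
      mid.length ≤ C * X.dist a' b' := by
    obtain ⟨j₁, hj₁v, hj₁⟩ := Walk.mem_support_iff_exists_getVert.mp ha'p
    obtain ⟨j₂, hj₂v, hj₂⟩ := Walk.mem_support_iff_exists_getVert.mp hb'p
    rcases le_total j₁ j₂ with hj | hj
    · obtain ⟨q, hql, hqs⟩ := exists_subwalk p j₁ j₂ hj hj₂
      have hle := hidx j₁ j₂ hj hj₂
      rw [hj₁v, hj₂v] at hle
      refine ⟨q.copy hj₁v hj₂v, ?_, ?_⟩
      · intro x hx; rw [Walk.support_copy] at hx; exact hqs x hx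
      · rw [Walk.length_copy, hql]; omega
    · obtain ⟨q, hql, hqs⟩ := exists_subwalk p j₂ j₁ hj hj₁
      have hle := hidx j₂ j₁ hj hj₁
      rw [hj₁v, hj₂v] at hle
      have hcomm : X.dist b' a' = X.dist a' b' := SimpleGraph.dist_comm
      rw [hcomm] at hle
      refine ⟨(q.copy hj₂v hj₁v).reverse, ?_, ?_⟩
      · intro x hx
        rw [Walk.support_reverse, List.mem_reverse, Walk.support_copy] at hx
        exact hqs x hx
      · rw [Walk.length_reverse, Walk.length_copy, hql]; omega
  obtain ⟨mid, hmids, hmidl⟩ := hmid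
  set Q := g1.append (mid.append g2) with hQdef
  have hQfar : ∀ u ∈ Q.support, D ≤ X.dist w0 u := by
    intro u hu
    rw [Walk.mem_support_append_iff] at hu
    rcases hu with hu | hu
    swap
    · rw [Walk.mem_support_append_iff] at hu
      rcases hu with hu | hu
      · have := hminle w0 u (hmids u hu)
        omega
      · -- u on g2 from b' to wp
        obtain ⟨t, htv, ht⟩ := Walk.mem_support_iff_exists_getVert.mp hu
        have hdu : X.dist u wp ≤ X.dist b' wp := by
          have h7 := dist_getVert_le g2 ht (le_refl g2.length)
          rw [Walk.getVert_length, htv] at h7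
          omega
        have hwpb' : X.dist b' wp ≤ D := by
          have hcm : X.dist wp b' = X.dist b' wp := SimpleGraph.dist_comm
          omega
        rcases Nat.lt_or_ge (i₀ + 2 * D) γ.length with hclamp | hclamp
        · have h2D : X.dist w0 wp = 2 * D := by rw [hd02]; omega
          have htri : X.dist w0 wp ≤ X.dist w0 u + X.dist u wp := hc.dist_triangle
          omega
        · have hwpb : wp = b := by
            rw [hwpdef]
            have h9 : i₂ = γ.length := by omega
            rw [h9, Walk.getVert_length]
          have hwpp : wp ∈ p.support := by rw [hwpb]; exact p.end_mem_support
          have h0 : X.dist b' wp = 0 := by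
            have h8 := hminle wp wp hwpp
            have hself : X.dist wp wp = 0 := SimpleGraph.dist_self
            have hcm : X.dist wp b' = X.dist b' wp := SimpleGraph.dist_comm
            omega
          have hminw0 := hminle w0 wp hwpp
          have htri : X.dist w0 wp ≤ X.dist w0 u + X.dist u wp := hc.dist_triangle
          omega
    · -- u on g1 from wm to a'
      obtain ⟨t, htv, ht⟩ := Walk.mem_support_iff_exists_getVert.mp hu
      have hdu : X.dist wm u ≤ X.dist wm a' := by
        have := dist_getVert_le g1 (Nat.zero_le t) ht
        rw [Walk.getVert_zero, htv] at this
        omega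
      rcases Nat.lt_or_ge i₀ (2 * D) with hclamp | hclamp
      · -- clamped : wm = a ∈ p.support
        have hwma : wm = a := by
          rw [hwmdef]
          have : i₁ = 0 := by omega
          rw [this, Walk.getVert_zero]
        have hwmp : wm ∈ p.support := by rw [hwma]; exact p.start_mem_support
        have h0 : X.dist wm a' = 0 := by
          have := hminle wm wm hwmp
          have hself : X.dist wm wm = 0 := SimpleGraph.dist_self
          omega
        have hminw0 := hminle w0 wm hwmp
        have htri : X.dist w0 wm ≤ X.dist w0 u + X.dist u wm := hc.dist_triangle
        have hcm : X.dist u wm = X.dist wm u := SimpleGraph.dist_comm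
        omega
      · -- not clamped : dist wm w0 = 2D
        have h2D : X.dist wm w0 = 2 * D := by rw [hd10]; omega
        have htri : X.dist wm w0 ≤ X.dist wm u + X.dist u w0 := hc.dist_triangle
        have hcm : X.dist u w0 = X.dist w0 u := SimpleGraph.dist_comm
        omega
  rcases Nat.eq_zero_or_pos Q.length with hQ0 | hQpos
  · exfalso
    have hwmwp : wm = wp := Walk.eq_of_length_eq_zero hQ0
    have : X.dist wm wp = 0 := by rw [hwmwp]; exact SimpleGraph.dist_self
    rw [hd12] at this
    have hi12 : i₂ = i₀ := by omega
    have hℓ : i₀ = γ.length := by omega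
    have hw0b : w0 = b := by rw [← hgv0, hℓ, Walk.getVert_length]
    have : h w0 ≤ 0 := by
      have := hminle w0 b p.end_mem_support
      have hself : X.dist w0 b = 0 := by rw [hw0b]; exact SimpleGraph.dist_self
      omega
    omega
  · have hab' : X.dist a' b' ≤ 6 * D := by
      have t1 : X.dist a' b' ≤ X.dist a' wm + X.dist wm b' := hc.dist_triangle
      have t2 : X.dist wm b' ≤ X.dist wm wp + X.dist wp b' := hc.dist_triangle
      have c1 : X.dist a' wm = X.dist wm a' := SimpleGraph.dist_comm
      rw [hd12] at t2
      omega
    have hQlen : Q.length ≤ 8 * C * D := by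
      have hQl : Q.length = g1.length + (mid.length + g2.length) := by
        simp [hQdef, Walk.length_append]
      have h1 : g1.length ≤ D := by rw [hg1]; exact ha'D
      have h2 : g2.length ≤ D := by
        rw [hg2]
        have : X.dist wp b' = X.dist b' wp := SimpleGraph.dist_comm
        omega
      have h3 : mid.length ≤ C * (6 * D) :=
        le_trans hmidl (Nat.mul_le_mul_left C hab')
      have h4 : D + (C * (6 * D) + D) ≤ 8 * C * D := by nlinarith
      omega
    have hklt : 8 * C * D < 2 ^ (Nat.log 2 (8 * C * D) + 1) :=
      Nat.lt_pow_succ_log_self (by norm_num) _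
    have hk : Q.length ≤ 2 ^ (Nat.log 2 (8 * C * D) + 1) := by omega
    have havoid := avoid h4 Q w0 D (Nat.log 2 (8 * C * D) + 1) hQpos hk hQfar
    have he : ee X wm wp w0 = 0 := by
      simp only [ee]
      have c2 : X.dist wp w0 = X.dist w0 wp := SimpleGraph.dist_comm
      rw [c2, hd10, hd02, hd12]
      omega
    rw [he] at havoid
    have hZ : ((2 * D : ℕ) : ℤ) ≤ ((δ * (Nat.log 2 (8 * C * D) + 1) + 1 : ℕ) : ℤ) := by
      push_cast at havoid ⊢
      linarith
    exact morse_arith hC hD1 (by exact_mod_cast hZ)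

lemma morse2 (h4 : FourPt X δ) (hc : X.Connected) (C : ℕ) (hC : 1 ≤ C) {a b : V}
    (p : X.Walk a b)
    (hidx : ∀ i j, i ≤ j → j ≤ p.length →
      (j - i : ℕ) ≤ C * X.dist (p.getVert i) (p.getVert j))
    {γ : X.Walk a b} (hγ : γ.length = X.dist a b) :
    ∀ u ∈ p.support, ∃ m ∈ γ.support, X.dist u m ≤ D1 C δ := by
  classical
  rcases Nat.eq_zero_or_pos γ.length with hℓ0 | hℓ1
  · have hd0 : X.dist a b = 0 := by omega
    have hp0 : p.length = 0 := by
      have := hidx 0 p.length (Nat.zero_le _) (le_refl _)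
      rw [Walk.getVert_zero, Walk.getVert_length, hd0] at this
      omega
    intro u hu
    have hua : u = a := by
      cases p with
      | nil => simpa using hu
      | cons h q => simp [Walk.length_cons] at hp0
    refine ⟨a, γ.start_mem_support, ?_⟩
    rw [hua]
    simp [SimpleGraph.dist_self]
  have H : ∀ i, ∃ j, j ≤ p.length ∧ (i = 0 → j = 0) ∧ (γ.length ≤ i → j = p.length) ∧
      (i ≤ γ.length → X.dist (γ.getVert i) (p.getVert j) ≤ D0 C δ) := by
    intro i
    rcases Nat.eq_zero_or_pos i with hi0 | hipos
    · refine ⟨0, Nat.zero_le _, fun _ => rfl, fun hle => by omega, fun _ => ?_⟩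
      rw [hi0, Walk.getVert_zero, Walk.getVert_zero]
      simp [SimpleGraph.dist_self]
    rcases Nat.lt_or_ge i γ.length with hiℓ | hiℓ
    · obtain ⟨u', hu'p, hu'd⟩ := morse1 h4 hc C hC p hidx hγ (γ.getVert i)
        (getVert_mem_support γ i)
      obtain ⟨j, hjv, hj⟩ := Walk.mem_support_iff_exists_getVert.mp hu'p
      exact ⟨j, hj, fun h0 => by omega, fun hle => by omega, fun _ => by rwa [hjv]⟩
    · refine ⟨p.length, le_refl _, fun h0 => by omega, fun _ => rfl, fun hle => ?_⟩
      have : i = γ.length := by omega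
      rw [this, Walk.getVert_length, Walk.getVert_length]
      simp [SimpleGraph.dist_self]
  choose J hJ1 hJ2 hJ3 hJ4 using H
  intro u hu
  obtain ⟨t, htv, ht⟩ := Walk.mem_support_iff_exists_getVert.mp hu
  have hP0 : J 0 ≤ t := by rw [hJ2 0 rfl]; exact Nat.zero_le _
  set istar := Nat.findGreatest (fun i => J i ≤ t) γ.length with histardef
  have hspec : J istar ≤ t :=
    Nat.findGreatest_spec (P := fun i => J i ≤ t) (n := γ.length) (Nat.zero_le _) hP0
  have histar : istar ≤ γ.length := Nat.findGreatest_le _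
  rcases eq_or_lt_of_le histar with heq | hlt
  · have : J γ.length = p.length := hJ3 γ.length (le_refl _)
    rw [heq, this] at hspec
    have htp : t = p.length := by omega
    refine ⟨b, γ.end_mem_support, ?_⟩
    have : u = b := by rw [← htv, htp, Walk.getVert_length]
    rw [this]
    simp [SimpleGraph.dist_self]
  · have hnot : ¬ (J (istar + 1) ≤ t) :=
      Nat.findGreatest_is_greatest (P := fun i => J i ≤ t) (n := γ.length)
        (by omega) (by omega)
    have d1 : X.dist (γ.getVert istar) (p.getVert (J istar)) ≤ D0 C δ := hJ4 istar (by omega)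
    have d2 : X.dist (γ.getVert (istar + 1)) (p.getVert (J (istar + 1))) ≤ D0 C δ :=
      hJ4 (istar + 1) (by omega)
    have dadj : X.dist (γ.getVert istar) (γ.getVert (istar + 1)) ≤ 1 :=
      dist_adj_le_one (γ.adj_getVert_succ hlt)
    have dpp : X.dist (p.getVert (J istar)) (p.getVert (J (istar + 1))) ≤
        2 * D0 C δ + 1 := by
      have t1 : X.dist (p.getVert (J istar)) (p.getVert (J (istar + 1))) ≤
          X.dist (p.getVert (J istar)) (γ.getVert istar) +
          X.dist (γ.getVert istar) (p.getVert (J (istar + 1))) := hc.dist_triangle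
      have t2 : X.dist (γ.getVert istar) (p.getVert (J (istar + 1))) ≤
          X.dist (γ.getVert istar) (γ.getVert (istar + 1)) +
          X.dist (γ.getVert (istar + 1)) (p.getVert (J (istar + 1))) := hc.dist_triangle
      have c1 : X.dist (p.getVert (J istar)) (γ.getVert istar) =
          X.dist (γ.getVert istar) (p.getVert (J istar)) := SimpleGraph.dist_comm
      omega
    have hJle : J istar ≤ J (istar + 1) := by omega
    have hJub : J (istar + 1) ≤ p.length := hJ1 _
    have hidxle := hidx (J istar) (J (istar + 1)) hJle hJub
    have hCmul : C * X.dist (p.getVert (J istar)) (p.getVert (J (istar + 1))) ≤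
        C * (2 * D0 C δ + 1) := Nat.mul_le_mul_left C dpp
    have hdu : X.dist (p.getVert (J istar)) u ≤ t - J istar := by
      have := dist_getVert_le p hspec ht
      rwa [htv] at this
    refine ⟨γ.getVert istar, getVert_mem_support γ istar, ?_⟩
    have htri : X.dist u (γ.getVert istar) ≤ X.dist u (p.getVert (J istar)) +
        X.dist (p.getVert (J istar)) (γ.getVert istar) := hc.dist_triangle
    have c1 : X.dist u (p.getVert (J istar)) = X.dist (p.getVert (J istar)) u :=
      SimpleGraph.dist_comm
    have c2 : X.dist (p.getVert (J istar)) (γ.getVert istar) =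
        X.dist (γ.getVert istar) (p.getVert (J istar)) := SimpleGraph.dist_comm
    simp only [D1]
    omega

/-- slimness constant for the subgraph -/
def HY (C δ : ℕ) : ℕ := C * (D1 C δ + D0 C δ + 2 * δ + 1)

section Transfer

variable {W : Type*} {X : SimpleGraph V} {Y : SimpleGraph W} {f : Y →g X} {C δ : ℕ}

lemma map_hidx (hYc : Y.Connected) (hup : ∀ a b : W, Y.dist a b ≤ C * X.dist (f a) (f b))
    {u w : W} (q : Y.Walk u w) (hq : q.length = Y.dist u w) :
    ∀ i j, i ≤ j → j ≤ (q.map f).length →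
      (j - i : ℕ) ≤ C * X.dist ((q.map f).getVert i) ((q.map f).getVert j) := by
  intro i j hij hj
  rw [Walk.length_map] at hj
  rw [getVert_map, getVert_map]
  have h1 := geo_getVert hq hij hj
  have h2 := hup (q.getVert i) (q.getVert j)
  calc (j - i : ℕ) = Y.dist (q.getVert i) (q.getVert j) := h1.symm
  _ ≤ C * X.dist (f (q.getVert i)) (f (q.getVert j)) := h2

lemma slimY (h4 : FourPt X δ) (hXc : X.Connected) (hYc : Y.Connected) (hC : 1 ≤ C)
    (hup : ∀ a b : W, Y.dist a b ≤ C * X.dist (f a) (f b))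
    {x y z : W} {pxy : Y.Walk x y} {pyz : Y.Walk y z} {pxz : Y.Walk x z}
    (hxy : pxy.length = Y.dist x y) (hyz : pyz.length = Y.dist y z)
    (hxz : pxz.length = Y.dist x z) :
    ∀ w ∈ pxz.support, ∃ w', (w' ∈ pxy.support ∨ w' ∈ pyz.support) ∧
      Y.dist w w' ≤ HY C δ := by
  intro w hw
  obtain ⟨gxy, hgxy⟩ := hXc.exists_walk_length_eq_dist (f x) (f y)
  obtain ⟨gyz, hgyz⟩ := hXc.exists_walk_length_eq_dist (f y) (f z)
  obtain ⟨gxz, hgxz⟩ := hXc.exists_walk_length_eq_dist (f x) (f z)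
  have hfw : f w ∈ (pxz.map f).support := by
    rw [Walk.support_map]; exact List.mem_map_of_mem hw
  obtain ⟨m, hm, hdm⟩ := morse2 h4 hXc C hC (pxz.map f)
    (map_hidx hYc hup pxz hxz) hgxz (f w) hfw
  obtain ⟨m', hm', hdm'⟩ := slimX h4 hXc hgxy hgyz hgxz m hm
  rcases hm' with hside | hside
  · obtain ⟨u', hu', hdu'⟩ := morse1 h4 hXc C hC (pxy.map f)
      (map_hidx hYc hup pxy hxy) hgxy m' hside
    rw [Walk.support_map] at hu'
    obtain ⟨w', hw', rfl⟩ := List.mem_map.mp hu'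
    refine ⟨w', Or.inl hw', ?_⟩
    have t1 : X.dist (f w) m' ≤ X.dist (f w) m + X.dist m m' := hXc.dist_triangle
    have t2 : X.dist (f w) (f w') ≤ X.dist (f w) m' + X.dist m' (f w') := hXc.dist_triangle
    have hup' := hup w w'
    have hb : X.dist (f w) (f w') ≤ D1 C δ + D0 C δ + 2 * δ + 1 := by omega
    have hmono := Nat.mul_le_mul_left C hb
    simp only [HY]
    omega
  · obtain ⟨u', hu', hdu'⟩ := morse1 h4 hXc C hC (pyz.map f)
      (map_hidx hYc hup pyz hyz) hgyz m' hside
    rw [Walk.support_map] at hu'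
    obtain ⟨w', hw', rfl⟩ := List.mem_map.mp hu'
    refine ⟨w', Or.inr hw', ?_⟩
    have t1 : X.dist (f w) m' ≤ X.dist (f w) m + X.dist m m' := hXc.dist_triangle
    have t2 : X.dist (f w) (f w') ≤ X.dist (f w) m' + X.dist m' (f w') := hXc.dist_triangle
    have hup' := hup w w'
    have hb : X.dist (f w) (f w') ≤ D1 C δ + D0 C δ + 2 * δ + 1 := by omega
    have hmono := Nat.mul_le_mul_left C hb
    simp only [HY]
    omega

lemma distGeoY (h4 : FourPt X δ) (hXc : X.Connected) (hYc : Y.Connected) (hC : 1 ≤ C)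
    (hup : ∀ a b : W, Y.dist a b ≤ C * X.dist (f a) (f b))
    {x y : W} {q : Y.Walk x y} (hq : q.length = Y.dist x y) (w : W) :
    ∃ m ∈ q.support, (2 * (Y.dist w m) : ℤ) ≤ ee Y x y w + 4 * HY C δ + 1 := by
  have t1 : Y.dist y w ≤ Y.dist y x + Y.dist x w := hYc.dist_triangle
  have t2 : Y.dist x w ≤ Y.dist x y + Y.dist y w := hYc.dist_triangle
  have cyx : Y.dist y x = Y.dist x y := SimpleGraph.dist_comm
  rw [cyx] at t1
  set i := (Y.dist x w + q.length - Y.dist y w) / 2 with hidef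
  have hi : i ≤ q.length := by omega
  refine ⟨q.getVert i, getVert_mem_support q i, ?_⟩
  have h1 : Y.dist x (q.getVert i) = i := by
    have := geo_getVert hq (Nat.zero_le i) hi
    rwa [Walk.getVert_zero, Nat.sub_zero] at this
  have h2 : Y.dist (q.getVert i) y = q.length - i := by
    have := geo_getVert hq hi (le_refl q.length)
    rwa [Walk.getVert_length] at this
  obtain ⟨gxw, hgxw⟩ := hYc.exists_walk_length_eq_dist x w
  obtain ⟨gwy, hgwy⟩ := hYc.exists_walk_length_eq_dist w y
  obtain ⟨m', hside, hdm'⟩ := slimY h4 hXc hYc hC hup hgxw hgwy hq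
    (q.getVert i) (getVert_mem_support q i)
  simp only [ee]
  rcases hside with hmem | hmem
  · obtain ⟨j, hjv, hj⟩ := Walk.mem_support_iff_exists_getVert.mp hmem
    have e1 : Y.dist x m' = j := by
      have := geo_getVert hgxw (Nat.zero_le j) hj
      rwa [Walk.getVert_zero, Nat.sub_zero, hjv] at this
    have e2 : Y.dist m' w = gxw.length - j := by
      have := geo_getVert hgxw hj (le_refl gxw.length)
      rwa [Walk.getVert_length, hjv] at this
    have esum : Y.dist x m' + Y.dist m' w = Y.dist x w := by
      rw [e1, e2, ← hgxw]; omega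
    have tr1 : Y.dist x (q.getVert i) ≤ Y.dist x m' + Y.dist m' (q.getVert i) :=
      hYc.dist_triangle
    have tr2 : Y.dist w (q.getVert i) ≤ Y.dist w m' + Y.dist m' (q.getVert i) :=
      hYc.dist_triangle
    have c1 : Y.dist m' (q.getVert i) = Y.dist (q.getVert i) m' := SimpleGraph.dist_comm
    have c2 : Y.dist w m' = Y.dist m' w := SimpleGraph.dist_comm
    omega
  · obtain ⟨j, hjv, hj⟩ := Walk.mem_support_iff_exists_getVert.mp hmem
    have e1 : Y.dist w m' = j := by
      have := geo_getVert hgwy (Nat.zero_le j) hj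
      rwa [Walk.getVert_zero, Nat.sub_zero, hjv] at this
    have e2 : Y.dist m' y = gwy.length - j := by
      have := geo_getVert hgwy hj (le_refl gwy.length)
      rwa [Walk.getVert_length, hjv] at this
    have esum : Y.dist w m' + Y.dist m' y = Y.dist w y := by
      rw [e1, e2, ← hgwy]; omega
    have tr1 : Y.dist (q.getVert i) y ≤ Y.dist (q.getVert i) m' + Y.dist m' y :=
      hYc.dist_triangle
    have tr2 : Y.dist w (q.getVert i) ≤ Y.dist w m' + Y.dist m' (q.getVert i) :=
      hYc.dist_triangle
    have c1 : Y.dist m' (q.getVert i) = Y.dist (q.getVert i) m' := SimpleGraph.dist_comm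
    have c2 : Y.dist w y = Y.dist y w := SimpleGraph.dist_comm
    omega

lemma gpY (h4 : FourPt X δ) (hXc : X.Connected) (hYc : Y.Connected) (hC : 1 ≤ C)
    (hup : ∀ a b : W, Y.dist a b ≤ C * X.dist (f a) (f b)) (x y z w : W) :
    min (ee Y x y w) (ee Y y z w) ≤ ee Y x z w + (6 * HY C δ + 1) := by
  obtain ⟨q, hq⟩ := hYc.exists_walk_length_eq_dist x z
  obtain ⟨m, hm, h9⟩ := distGeoY h4 hXc hYc hC hup hq w
  obtain ⟨gxy, hgxy⟩ := hYc.exists_walk_length_eq_dist x y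
  obtain ⟨gyz, hgyz⟩ := hYc.exists_walk_length_eq_dist y z
  obtain ⟨m', hside, hdm'⟩ := slimY h4 hXc hYc hC hup hgxy hgyz hq m hm
  rcases hside with hmem | hmem
  · refine le_trans (min_le_left _ _) ?_
    obtain ⟨j, hjv, hj⟩ := Walk.mem_support_iff_exists_getVert.mp hmem
    have e1 : Y.dist x m' = j := by
      have := geo_getVert hgxy (Nat.zero_le j) hj
      rwa [Walk.getVert_zero, Nat.sub_zero, hjv] at this
    have e2 : Y.dist m' y = gxy.length - j := by
      have := geo_getVert hgxy hj (le_refl gxy.length)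
      rwa [Walk.getVert_length, hjv] at this
    have esum : Y.dist x m' + Y.dist m' y = Y.dist x y := by
      rw [e1, e2, ← hgxy]; omega
    have tr1 : Y.dist x w ≤ Y.dist x m' + Y.dist m' w := hYc.dist_triangle
    have tr2 : Y.dist y w ≤ Y.dist y m' + Y.dist m' w := hYc.dist_triangle
    have tr3 : Y.dist m' w ≤ Y.dist m' m + Y.dist m w := hYc.dist_triangle
    have c1 : Y.dist y m' = Y.dist m' y := SimpleGraph.dist_comm
    have c2 : Y.dist m' m = Y.dist m m' := SimpleGraph.dist_comm
    have c3 : Y.dist m w = Y.dist w m := SimpleGraph.dist_comm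
    simp only [ee] at h9 ⊢
    omega
  · refine le_trans (min_le_right _ _) ?_
    obtain ⟨j, hjv, hj⟩ := Walk.mem_support_iff_exists_getVert.mp hmem
    have e1 : Y.dist y m' = j := by
      have := geo_getVert hgyz (Nat.zero_le j) hj
      rwa [Walk.getVert_zero, Nat.sub_zero, hjv] at this
    have e2 : Y.dist m' z = gyz.length - j := by
      have := geo_getVert hgyz hj (le_refl gyz.length)
      rwa [Walk.getVert_length, hjv] at this
    have esum : Y.dist y m' + Y.dist m' z = Y.dist y z := by
      rw [e1, e2, ← hgyz]; omega
    have tr1 : Y.dist y w ≤ Y.dist y m' + Y.dist m' w := hYc.dist_triangle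
    have tr2 : Y.dist z w ≤ Y.dist z m' + Y.dist m' w := hYc.dist_triangle
    have tr3 : Y.dist m' w ≤ Y.dist m' m + Y.dist m w := hYc.dist_triangle
    have c1 : Y.dist z m' = Y.dist m' z := SimpleGraph.dist_comm
    have c2 : Y.dist m' m = Y.dist m m' := SimpleGraph.dist_comm
    have c3 : Y.dist m w = Y.dist w m := SimpleGraph.dist_comm
    simp only [ee] at h9 ⊢
    omega

theorem fourpt_transfer (h4 : FourPt X δ) (hXc : X.Connected) (hYc : Y.Connected)
    (hC : 1 ≤ C) (hup : ∀ a b : W, Y.dist a b ≤ C * X.dist (f a) (f b)) :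
    FourPt Y (6 * HY C δ + 1) := by
  intro x y z t
  have h := gpY h4 hXc hYc hC hup x z y t
  rcases min_cases (ee Y x z t) (ee Y z y t) with ⟨hm, -⟩ | ⟨hm, -⟩ <;> rw [hm] at h
  · have hkey : (Y.dist x y : ℤ) + Y.dist z t ≤
        ((Y.dist x z : ℤ) + Y.dist y t) + (6 * HY C δ + 1) := by
      simp only [ee] at h
      have c1 : Y.dist y t = Y.dist t y := SimpleGraph.dist_comm
      have c2 : Y.dist z t = Y.dist t z := SimpleGraph.dist_comm
      omega
    exact le_trans hkey (add_le_add_left (le_max_left _ _) _)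
  · have hkey : (Y.dist x y : ℤ) + Y.dist z t ≤
        ((Y.dist x t : ℤ) + Y.dist y z) + (6 * HY C δ + 1) := by
      simp only [ee] at h
      have c1 : Y.dist z y = Y.dist y z := SimpleGraph.dist_comm
      have c2 : Y.dist z t = Y.dist t z := SimpleGraph.dist_comm
      omega
    exact le_trans hkey (add_le_add_left (le_max_right _ _) _)

end Transfer

end Core

end RemAux


section App

lemma hyperbolic_of_fourpt {X : SimpleGraph V} {δ : ℕ} (h4 : RemAux.FourPt X δ) :
    Hyperbolic X := by
  refine ⟨(δ : ℝ), fun x y z t => ?_⟩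
  have h := h4 x y z t
  have hcast : ((max ((X.dist x z : ℤ) + X.dist y t) ((X.dist x t : ℤ) + X.dist y z) : ℤ) : ℝ)
      = max ((X.dist x z : ℝ) + X.dist y t) ((X.dist x t : ℝ) + X.dist y z) := by
    push_cast [Int.cast_max]
    rfl
  calc (X.dist x y : ℝ) + X.dist z t
      = (((X.dist x y : ℤ) + X.dist z t : ℤ) : ℝ) := by push_cast; rfl
  _ ≤ ((max ((X.dist x z : ℤ) + X.dist y t) ((X.dist x t : ℤ) + X.dist y z) + δ : ℤ) : ℝ) := by
      exact_mod_cast h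
  _ = _ := by push_cast [Int.cast_max]; rfl

lemma fourpt_of_hyperbolic {X : SimpleGraph V} (h : Hyperbolic X) :
    ∃ δ : ℕ, RemAux.FourPt X δ := by
  obtain ⟨δr, hδ⟩ := h
  refine ⟨⌈δr⌉₊, fun x y z t => ?_⟩
  have h0 := hδ x y z t
  have hle : δr ≤ (⌈δr⌉₊ : ℝ) := Nat.le_ceil δr
  have key : (X.dist x y : ℝ) + X.dist z t ≤
      max ((X.dist x z : ℝ) + X.dist y t) ((X.dist x t : ℝ) + X.dist y z) + (⌈δr⌉₊ : ℝ) :=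
    le_trans h0 (by linarith)
  rcases le_total ((X.dist x z : ℝ) + X.dist y t) ((X.dist x t : ℝ) + X.dist y z) with hm | hm
  · rw [max_eq_right hm] at key
    refine le_trans ?_ (add_le_add_left (le_max_right _ _) _)
    exact_mod_cast key
  · rw [max_eq_left hm] at key
    refine le_trans ?_ (add_le_add_left (le_max_left _ _) _)
    exact_mod_cast key

lemma dist_map_le {W : Type*} {A : SimpleGraph V} {B : SimpleGraph W} (f : A →g B)
    {u v : V} (h : A.Reachable u v) : B.dist (f u) (f v) ≤ A.dist u v := by
  obtain ⟨p, hp⟩ := h.exists_walk_length_eq_dist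
  calc B.dist (f u) (f v) ≤ (p.map f).length := SimpleGraph.dist_le _
  _ = p.length := by simp
  _ = A.dist u v := hp

/-- the tautological homomorphism from `K` to the coercion of `⊤`. -/
def topHom (K : SimpleGraph V) : K →g (⊤ : K.Subgraph).coe where
  toFun x := ⟨x, by simp⟩
  map_rel' h := by simpa using h

lemma top_dist {K : SimpleGraph V} (hconn : K.Connected) (u v : V)
    (hu : u ∈ (⊤ : K.Subgraph).verts) (hv : v ∈ (⊤ : K.Subgraph).verts) :
    (⊤ : K.Subgraph).coe.dist ⟨u, hu⟩ ⟨v, hv⟩ = K.dist u v := by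
  refine le_antisymm ?_ ?_
  · exact dist_map_le (topHom K) (hconn.preconnected u v)
  · have hr : (⊤ : K.Subgraph).coe.Reachable ⟨u, hu⟩ ⟨v, hv⟩ :=
      SimpleGraph.Reachable.map (topHom K) (hconn.preconnected u v)
    exact dist_map_le (⊤ : K.Subgraph).hom hr

lemma fine_subgraph {K : SimpleGraph V} (K' : K.Subgraph) (hf : Fine K) : Fine K'.coe := by
  intro n u w hadj
  have hinj : Function.Injective (K'.hom : K'.verts → V) := Subgraph.hom_injective
  have hKadj : K.Adj u.1 w.1 := K'.adj_sub hadj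
  have hfin := hf n u.1 w.1 hKadj
  refine Set.Finite.of_finite_image (f := fun c : K'.coe.Walk u u => c.map K'.hom) ?_ ?_
  · apply hfin.subset
    rintro _ ⟨c, ⟨hc1, hc2, hc3⟩, rfl⟩
    refine ⟨?_, (Walk.length_map _ _).trans hc2, ?_⟩
    · exact (Walk.map_isCycle_iff_of_injective hinj).mpr hc1
    · have hmem : s(u.1, w.1) ∈ (c.map K'.hom).edges := by
        rw [Walk.edges_map]
        have := List.mem_map_of_mem (f := Sym2.map (K'.hom : K'.verts → V)) hc3
        rwa [Sym2.map_pair_eq] at this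
      exact hmem
  · intro c1 _ c2 _ heq
    exact Walk.map_injective_of_injective hinj u u heq

end App


section Reroute

variable [Group G]

lemma reroute_edge (φ : G →* Equiv.Perm V) {K : SimpleGraph V}
    (hconn : K.Connected) (hacts : ActsOn φ K) (a b : V)
    {K' : K.Subgraph}
    (hK' : K' = (⊤ : K.Subgraph).deleteEdges (⋃ g : G, {s(φ g a, φ g b)}))
    (hconn' : K'.coe.Connected) :
    ∃ C : ℕ, 1 ≤ C ∧
      (∀ (u w : V) (hu : u ∈ K'.verts) (hw : w ∈ K'.verts),
        K'.coe.dist ⟨u, hu⟩ ⟨w, hw⟩ ≤ C * K.dist u w) ∧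
      (∀ x : V, ∃ u, ∃ _ : u ∈ K'.verts, K.dist x u ≤ 1) := by
  subst hK'
  set E : Set (Sym2 V) := ⋃ g : G, {s(φ g a, φ g b)} with hE
  set J := (⊤ : K.Subgraph).deleteEdges E with hJ
  have hvert : ∀ x : V, x ∈ J.verts := by
    intro x
    rw [hJ, Subgraph.deleteEdges_verts, Subgraph.verts_top]
    exact Set.mem_univ x
  have hEinv : ∀ (g : G) (u w : V), s(u, w) ∈ E → s(φ g u, φ g w) ∈ E := by
    intro g u w hm
    rw [hE, Set.mem_iUnion] at hm ⊢
    obtain ⟨g', hg'⟩ := hm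
    rw [Set.mem_singleton_iff, Sym2.eq_iff] at hg'
    refine ⟨g * g', ?_⟩
    rw [Set.mem_singleton_iff, Sym2.eq_iff]
    have e1 : φ (g * g') a = φ g (φ g' a) := by rw [map_mul, Equiv.Perm.mul_apply]
    have e2 : φ (g * g') b = φ g (φ g' b) := by rw [map_mul, Equiv.Perm.mul_apply]
    rcases hg' with ⟨h1, h2⟩ | ⟨h1, h2⟩
    · left; rw [e1, e2, h1, h2]; exact ⟨rfl, rfl⟩
    · right; rw [e1, e2, h1, h2]; exact ⟨rfl, rfl⟩
  have hadjchar : ∀ u w : V, J.Adj u w ↔ K.Adj u w ∧ s(u, w) ∉ E := by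
    intro u w
    rw [hJ, Subgraph.deleteEdges_adj, Subgraph.top_adj]
  have hmaps : ∀ g : G, ∃ f : J.coe →g J.coe, ∀ x : J.verts, (f x).1 = φ g x.1 := by
    intro g
    refine ⟨⟨fun x => ⟨φ g x.1, hvert _⟩, ?_⟩, fun x => rfl⟩
    intro x y hxy
    rw [Subgraph.coe_adj] at hxy ⊢
    rw [hadjchar] at hxy ⊢
    refine ⟨hacts g _ _ hxy.1, ?_⟩
    intro hmem
    have h2 := hEinv g⁻¹ _ _ hmem
    rw [map_inv, Equiv.Perm.inv_def, Equiv.symm_apply_apply, Equiv.symm_apply_apply] at h2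
    exact hxy.2 h2
  have hdisteq : ∀ (g : G) (u w : V),
      J.coe.dist ⟨φ g u, hvert _⟩ ⟨φ g w, hvert _⟩ ≤ J.coe.dist ⟨u, hvert u⟩ ⟨w, hvert w⟩ := by
    intro g u w
    obtain ⟨f, hf⟩ := hmaps g
    have hr : J.coe.Reachable ⟨u, hvert u⟩ ⟨w, hvert w⟩ := hconn'.preconnected _ _
    have hle := dist_map_le f hr
    have e1 : f ⟨u, hvert u⟩ = ⟨φ g u, hvert _⟩ := Subtype.ext (hf _)
    have e2 : f ⟨w, hvert w⟩ = ⟨φ g w, hvert _⟩ := Subtype.ext (hf _)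
    rwa [e1, e2] at hle
  set L := J.coe.dist ⟨a, hvert a⟩ ⟨b, hvert b⟩ + 1 with hL
  have key : ∀ (u w : V) (p : K.Walk u w),
      J.coe.dist ⟨u, hvert u⟩ ⟨w, hvert w⟩ ≤ L * p.length := by
    intro u w p
    induction p with
    | nil => simp [SimpleGraph.dist_self]
    | @cons u m w hadj q ih =>
      rw [Walk.length_cons]
      have htri : J.coe.dist ⟨u, hvert u⟩ ⟨w, hvert w⟩ ≤
          J.coe.dist ⟨u, hvert u⟩ ⟨m, hvert m⟩ + J.coe.dist ⟨m, hvert m⟩ ⟨w, hvert w⟩ :=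
        hconn'.dist_triangle
      have hstep : J.coe.dist ⟨u, hvert u⟩ ⟨m, hvert m⟩ ≤ L := by
        by_cases hEm : s(u, m) ∈ E
        · rw [hE, Set.mem_iUnion] at hEm
          obtain ⟨g, hg⟩ := hEm
          rw [Set.mem_singleton_iff, Sym2.eq_iff] at hg
          have hgab := hdisteq g a b
          rcases hg with ⟨h1, h2⟩ | ⟨h1, h2⟩
          · subst h1; subst h2
            omega
          · subst h1; subst h2
            have hcm : J.coe.dist ⟨φ g b, hvert _⟩ ⟨φ g a, hvert _⟩ =
                J.coe.dist ⟨φ g a, hvert _⟩ ⟨φ g b, hvert _⟩ := SimpleGraph.dist_comm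
            omega
        · have hadj' : J.coe.Adj ⟨u, hvert u⟩ ⟨m, hvert m⟩ := by
            rw [Subgraph.coe_adj, hadjchar]
            exact ⟨hadj, hEm⟩
          have := RemAux.dist_adj_le_one hadj'
          omega
      have harith : L * (q.length + 1) = L + L * q.length := by ring
      omega
  refine ⟨L, by omega, ?_, ?_⟩
  · intro u w hu hw
    obtain ⟨p, hp⟩ := hconn.exists_walk_length_eq_dist u w
    have h9 := key u w p
    rw [hp] at h9
    exact h9
  · intro x
    exact ⟨x, hvert x, by simp [SimpleGraph.dist_self]⟩

lemma reroute_vertex (φ : G →* Equiv.Perm V) {K : SimpleGraph V}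
    (hconn : K.Connected) (hacts : ActsOn φ K) (v : V)
    (hfin : (K.neighborSet v).Finite)
    {K' : K.Subgraph}
    (hK' : K' = (⊤ : K.Subgraph).deleteVerts (⋃ g : G, {φ g v}))
    (hconn' : K'.coe.Connected) :
    ∃ C : ℕ, 1 ≤ C ∧
      (∀ (u w : V) (hu : u ∈ K'.verts) (hw : w ∈ K'.verts),
        K'.coe.dist ⟨u, hu⟩ ⟨w, hw⟩ ≤ C * K.dist u w) ∧
      (∀ x : V, ∃ u, ∃ _ : u ∈ K'.verts, K.dist x u ≤ 1) := by
  classical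
  subst hK'
  set S : Set V := ⋃ g : G, {φ g v} with hS
  set J := (⊤ : K.Subgraph).deleteVerts S with hJ
  have hSmem : ∀ x : V, x ∈ S ↔ ∃ g : G, φ g v = x := by
    intro x
    rw [hS, Set.mem_iUnion]
    simp [eq_comm]
  have hvmem : ∀ x : V, x ∈ J.verts ↔ x ∉ S := by
    intro x
    rw [hJ, Subgraph.deleteVerts_verts, Subgraph.verts_top]
    simp
  have hSinv : ∀ (g : G) (x : V), x ∈ S → φ g x ∈ S := by
    intro g x hx
    obtain ⟨g', hg'⟩ := (hSmem x).mp hx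
    refine (hSmem _).mpr ⟨g * g', ?_⟩
    rw [map_mul, Equiv.Perm.mul_apply, hg']
  have hSinv' : ∀ (g : G) (x : V), φ g x ∈ S → x ∈ S := by
    intro g x hx
    have := hSinv g⁻¹ _ hx
    rwa [map_inv, Equiv.Perm.inv_def, Equiv.symm_apply_apply] at this
  have hvS : v ∈ S := (hSmem v).mpr ⟨1, by simp⟩
  have hginv : ∀ (g : G) (x : V), φ g (φ g⁻¹ x) = x := by
    intro g x; rw [map_inv, Equiv.Perm.inv_def, Equiv.apply_symm_apply]
  have hadjchar : ∀ u w : V, J.Adj u w ↔ u ∉ S ∧ w ∉ S ∧ K.Adj u w := by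
    intro u w
    rw [hJ, Subgraph.deleteVerts_adj, Subgraph.verts_top, Subgraph.top_adj]
    simp only [Set.mem_univ, true_and]
  -- transported adjacency of translates of v
  have hadjtrans : ∀ (g : G) (x : V), K.Adj (φ g v) x → K.Adj v (φ g⁻¹ x) := by
    intro g x hx
    have h1 := hacts g⁻¹ _ _ hx
    rwa [show φ g⁻¹ (φ g v) = v by rw [map_inv, Equiv.Perm.inv_def, Equiv.symm_apply_apply]] at h1
  -- kept anchor vertex s₀ adjacent to v
  have hcross : ∀ (c d : V) (p : K.Walk c d), c ∉ S → d ∈ S →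
      ∃ x r : V, x ∉ S ∧ r ∈ S ∧ K.Adj x r := by
    intro c d p
    induction p with
    | nil => intro h1 h2; exact absurd h2 h1
    | @cons c m d hadj q ih =>
      intro h1 h2
      by_cases hm : m ∈ S
      · exact ⟨c, m, h1, hm, hadj⟩
      · exact ih hm h2
  obtain ⟨s₀, hs₀adj, hs₀S⟩ : ∃ s₀ : V, K.Adj v s₀ ∧ s₀ ∉ S := by
    obtain ⟨⟨u₀, hu₀⟩⟩ := hconn'.nonempty
    have hu₀S : u₀ ∉ S := (hvmem u₀).mp hu₀
    obtain ⟨p⟩ := hconn.preconnected u₀ v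
    obtain ⟨x, r, hx, hr, hadj⟩ := hcross u₀ v p hu₀S hvS
    obtain ⟨g, hg⟩ := (hSmem r).mp hr
    refine ⟨φ g⁻¹ x, ?_, ?_⟩
    · exact hadjtrans g x (by rw [hg]; exact hadj.symm)
    · intro hmem
      exact hx (hSinv' g⁻¹ x hmem)
  -- kept neighbours of all translates
  have hkeptnbr : ∀ r ∈ S, ∃ s : V, s ∉ S ∧ K.Adj r s := by
    intro r hr
    obtain ⟨g, rfl⟩ := (hSmem r).mp hr
    refine ⟨φ g s₀, ?_, hacts g _ _ hs₀adj⟩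
    intro hmem
    exact hs₀S (hSinv' g s₀ hmem)
  -- the finite configuration set
  set F : Set V := {x | K.Adj v x ∧ x ∉ S} ∪
    {x | ∃ r, r ∈ S ∧ K.Adj v r ∧ K.Adj r x ∧ x ∉ S} with hF
  have hNfin : ∀ r ∈ S, (K.neighborSet r).Finite := by
    intro r hr
    obtain ⟨g, rfl⟩ := (hSmem r).mp hr
    refine Set.Finite.subset (hfin.image (φ g)) ?_
    intro x hx
    have hadj' : K.Adj v (φ g⁻¹ x) := hadjtrans g x hx
    refine ⟨φ g⁻¹ x, hadj', ?_⟩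
    simp [map_inv]
  have hFfin : F.Finite := by
    rw [hF]
    apply Set.Finite.union
    · exact hfin.subset (fun x hx => hx.1)
    · have hsub : {x | ∃ r, r ∈ S ∧ K.Adj v r ∧ K.Adj r x ∧ x ∉ S} ⊆
          ⋃ r ∈ {r : V | r ∈ S ∧ K.Adj v r}, K.neighborSet r := by
        rintro x ⟨r, h1, h2, h3, -⟩
        exact Set.mem_biUnion ⟨h1, h2⟩ h3
      refine Set.Finite.subset (Set.Finite.biUnion ?_ ?_) hsub
      · exact hfin.subset (fun r hr => hr.2)
      · intro r hr
        exact hNfin r hr.1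
  have hFkept : ∀ x ∈ F, x ∉ S := by
    rintro x (⟨-, h⟩ | ⟨r, -, -, -, h⟩) <;> exact h
  -- the bound over pairs from F
  obtain ⟨L, hLub⟩ : ∃ L : ℕ, ∀ (x y : V) (hx : x ∈ F) (hy : y ∈ F),
      J.coe.dist ⟨x, (hvmem x).mpr (hFkept x hx)⟩ ⟨y, (hvmem y).mpr (hFkept y hy)⟩ ≤ L := by
    set dfun : V × V → ℕ := fun pr =>
      if h : pr.1 ∉ S ∧ pr.2 ∉ S then
        J.coe.dist ⟨pr.1, (hvmem _).mpr h.1⟩ ⟨pr.2, (hvmem _).mpr h.2⟩ else 0 with hdfun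
    have hDfin : (dfun '' (F ×ˢ F)).Finite := (hFfin.prod hFfin).image dfun
    obtain ⟨L, hL⟩ := hDfin.bddAbove
    refine ⟨L, fun x y hx hy => ?_⟩
    have hmem : dfun (x, y) ∈ dfun '' (F ×ˢ F) :=
      Set.mem_image_of_mem dfun (Set.mem_prod.mpr ⟨hx, hy⟩)
    have heval : dfun (x, y) =
        J.coe.dist ⟨x, (hvmem x).mpr (hFkept x hx)⟩ ⟨y, (hvmem y).mpr (hFkept y hy)⟩ := by
      rw [hdfun]
      exact dif_pos ⟨hFkept x hx, hFkept y hy⟩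
    rw [← heval]
    exact hL hmem
  -- equivariance
  have hvertinv : ∀ (g : G) (x : V), x ∉ S → φ g x ∉ S := by
    intro g x hx hmem
    exact hx (hSinv' g x hmem)
  have hmaps : ∀ g : G, ∃ f : J.coe →g J.coe, ∀ x : J.verts, (f x).1 = φ g x.1 := by
    intro g
    refine ⟨⟨fun x => ⟨φ g x.1, (hvmem _).mpr (hvertinv g x.1 ((hvmem _).mp x.2))⟩, ?_⟩,
      fun x => rfl⟩
    intro x y hxy
    rw [Subgraph.coe_adj] at hxy ⊢
    rw [hadjchar] at hxy ⊢
    obtain ⟨h1, h2, h3⟩ := hxy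
    exact ⟨hvertinv g _ h1, hvertinv g _ h2, hacts g _ _ h3⟩
  have hdisteq : ∀ (g : G) (u w : V) (hu : u ∉ S) (hw : w ∉ S)
      (hu' : φ g u ∉ S) (hw' : φ g w ∉ S),
      J.coe.dist ⟨φ g u, (hvmem _).mpr hu'⟩ ⟨φ g w, (hvmem _).mpr hw'⟩ ≤
        J.coe.dist ⟨u, (hvmem _).mpr hu⟩ ⟨w, (hvmem _).mpr hw⟩ := by
    intro g u w hu hw hu' hw'
    obtain ⟨f, hf⟩ := hmaps g
    have hr : J.coe.Reachable ⟨u, (hvmem _).mpr hu⟩ ⟨w, (hvmem _).mpr hw⟩ :=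
      hconn'.preconnected _ _
    have hle := dist_map_le f hr
    have e1 : f ⟨u, (hvmem _).mpr hu⟩ = ⟨φ g u, (hvmem _).mpr hu'⟩ := Subtype.ext (hf _)
    have e2 : f ⟨w, (hvmem _).mpr hw⟩ = ⟨φ g w, (hvmem _).mpr hw'⟩ := Subtype.ext (hf _)
    rwa [e1, e2] at hle
  -- lemma A/B : pairs near one or two removed vertices
  have hpair : ∀ (x y : V) (hx : x ∉ S) (hy : y ∉ S),
      ((∃ r ∈ S, K.Adj r x ∧ K.Adj r y) ∨
       (∃ r r' : V, r ∈ S ∧ r' ∈ S ∧ K.Adj r r' ∧ K.Adj r x ∧ K.Adj r' y)) →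
      J.coe.dist ⟨x, (hvmem _).mpr hx⟩ ⟨y, (hvmem _).mpr hy⟩ ≤ L := by
    intro x y hx hy hcase
    rcases hcase with ⟨r, hr, hrx, hry⟩ | ⟨r, r', hr, hr', hrr', hrx, hr'y⟩
    · obtain ⟨g, rfl⟩ := (hSmem r).mp hr
      have hx' : φ g⁻¹ x ∉ S := fun hm => hx (by
        have := hSinv g _ hm
        rwa [hginv] at this)
      have hy' : φ g⁻¹ y ∉ S := fun hm => hy (by
        have := hSinv g _ hm
        rwa [hginv] at this)
      have hxF : φ g⁻¹ x ∈ F := Or.inl ⟨hadjtrans g x hrx, hx'⟩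
      have hyF : φ g⁻¹ y ∈ F := Or.inl ⟨hadjtrans g y hry, hy'⟩
      have hLxy := hLub _ _ hxF hyF
      have hdeq := hdisteq g (φ g⁻¹ x) (φ g⁻¹ y) hx' hy'
        (by rw [hginv]; exact hx) (by rw [hginv]; exact hy)
      simp only [hginv] at hdeq
      exact le_trans hdeq hLxy
    · obtain ⟨g, rfl⟩ := (hSmem r).mp hr
      have hx' : φ g⁻¹ x ∉ S := fun hm => hx (by
        have := hSinv g _ hm
        rwa [hginv] at this)
      have hy' : φ g⁻¹ y ∉ S := fun hm => hy (by
        have := hSinv g _ hm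
        rwa [hginv] at this)
      have hxF : φ g⁻¹ x ∈ F := Or.inl ⟨hadjtrans g x hrx, hx'⟩
      have hr'' : φ g⁻¹ r' ∈ S := by
        obtain ⟨g', rfl⟩ := (hSmem r').mp hr'
        exact (hSmem _).mpr ⟨g⁻¹ * g', by rw [map_mul, Equiv.Perm.mul_apply]⟩
      have hyF : φ g⁻¹ y ∈ F := by
        exact Or.inr ⟨φ g⁻¹ r', hr'', hadjtrans g r' hrr', hacts g⁻¹ _ _ hr'y, hy'⟩
      have hLxy := hLub _ _ hxF hyF
      have hdeq := hdisteq g (φ g⁻¹ x) (φ g⁻¹ y) hx' hy'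
        (by rw [hginv]; exact hx) (by rw [hginv]; exact hy)
      simp only [hginv] at hdeq
      exact le_trans hdeq hLxy
  -- the anchored rerouting induction
  have anchor : ∀ (u w : V) (p : K.Walk u w), ∀ (x : V) (hw : w ∉ S) (hx : x ∉ S),
      ((u ∉ S ∧ x = u) ∨ (u ∈ S ∧ K.Adj u x)) →
      J.coe.dist ⟨x, (hvmem _).mpr hx⟩ ⟨w, (hvmem _).mpr hw⟩ ≤ (L + 1) * p.length := by
    intro u w p
    induction p with
    | nil =>
      intro x hw hx hcase
      rcases hcase with ⟨h1, rfl⟩ | ⟨h1, -⟩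
      · simp [SimpleGraph.dist_self]
      · exact absurd h1 hw
    | @cons u m w hadj q ih =>
      intro x hw hx hcase
      rw [Walk.length_cons]
      have harith : (L + 1) * (q.length + 1) = (L + 1) * q.length + (L + 1) := by ring
      by_cases hmS : m ∈ S
      · -- next vertex removed
        rcases hcase with ⟨huS, rfl⟩ | ⟨huS, hux⟩
        · -- current kept, anchor = u ; keep anchor
          have hnext := ih x hw hx (Or.inr ⟨hmS, hadj.symm⟩)
          omega
        · -- current removed, next removed : move anchor to kept neighbour of m
          obtain ⟨x', hx', hmx'⟩ := hkeptnbr m hmS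
          have hstep : J.coe.dist ⟨x, (hvmem _).mpr hx⟩ ⟨x', (hvmem _).mpr hx'⟩ ≤ L :=
            hpair x x' hx hx' (Or.inr ⟨u, m, huS, hmS, hadj, hux, hmx'⟩)
          have hnext := ih x' hw hx' (Or.inr ⟨hmS, hmx'⟩)
          have htri : J.coe.dist ⟨x, (hvmem _).mpr hx⟩ ⟨w, (hvmem _).mpr hw⟩ ≤
              J.coe.dist ⟨x, (hvmem _).mpr hx⟩ ⟨x', (hvmem _).mpr hx'⟩ +
              J.coe.dist ⟨x', (hvmem _).mpr hx'⟩ ⟨w, (hvmem _).mpr hw⟩ :=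
            hconn'.dist_triangle
          omega
      · -- next vertex kept
        have hnext := ih m hw hmS (Or.inl ⟨hmS, rfl⟩)
        have htri : J.coe.dist ⟨x, (hvmem _).mpr hx⟩ ⟨w, (hvmem _).mpr hw⟩ ≤
            J.coe.dist ⟨x, (hvmem _).mpr hx⟩ ⟨m, (hvmem _).mpr hmS⟩ +
            J.coe.dist ⟨m, (hvmem _).mpr hmS⟩ ⟨w, (hvmem _).mpr hw⟩ :=
          hconn'.dist_triangle
        have hstep : J.coe.dist ⟨x, (hvmem _).mpr hx⟩ ⟨m, (hvmem _).mpr hmS⟩ ≤ L + 1 := by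
          rcases hcase with ⟨huS, rfl⟩ | ⟨huS, hux⟩
          · -- edge x=u to m survives in J
            have hadj' : J.coe.Adj ⟨x, (hvmem _).mpr hx⟩ ⟨m, (hvmem _).mpr hmS⟩ := by
              rw [Subgraph.coe_adj, hadjchar]
              exact ⟨hx, hmS, hadj⟩
            have := RemAux.dist_adj_le_one hadj'
            omega
          · -- u removed : x and m are kept neighbours of u
            have := hpair x m hx hmS (Or.inl ⟨u, huS, hux, hadj⟩)
            omega
        omega
  refine ⟨L + 1, by omega, ?_, ?_⟩
  · intro u w hu hw
    have huS : u ∉ S := (hvmem u).mp hu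
    have hwS : w ∉ S := (hvmem w).mp hw
    obtain ⟨p, hp⟩ := hconn.exists_walk_length_eq_dist u w
    have h9 := anchor u w p u hwS huS (Or.inl ⟨huS, rfl⟩)
    rw [hp] at h9
    exact h9
  · intro x
    by_cases hxS : x ∈ S
    · obtain ⟨s, hsS, hadj⟩ := hkeptnbr x hxS
      exact ⟨s, (hvmem s).mpr hsS, RemAux.dist_adj_le_one hadj⟩
    · exact ⟨x, (hvmem x).mpr hxS, by simp [SimpleGraph.dist_self]⟩

end Reroute

/-- Removals preserve fineness and coarse geometry: if `G` acts cocompactly on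
the connected graph `K` with finite edge stabilizers and `K'` is obtained from
`K` by the `G`-removal of (all translates of) an edge, or of a finite-valence
vertex with its incident edges, then: if `K'` is connected, the inclusion
`K' ⊆ K` is a quasi-isometry (so `K'` is hyperbolic whenever `K` is); and if
`K` is fine then `K'` is fine. -/
theorem removals_preserve_fine_and_coarse_geometry [Group G]
    (φ : G →* Equiv.Perm V) (K : SimpleGraph V) (hconn : K.Connected)
    (hacts : ActsOn φ K) (hstabs : FiniteEdgeStabs φ K)
    (hedgeorb : FinEdgeOrbits φ K) (hvertorb : FinVertOrbits φ)
    (K' : K.Subgraph)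
    (hK' : (∃ a b : V, ∃ _ : K.Adj a b,
              K' = (⊤ : K.Subgraph).deleteEdges (⋃ g : G, {s(φ g a, φ g b)}))
         ∨ (∃ v : V, (K.neighborSet v).Finite ∧
              K' = (⊤ : K.Subgraph).deleteVerts (⋃ g : G, {φ g v}))) :
    (K'.coe.Connected →
      QISubIncl K' ⊤ le_top ∧ (Hyperbolic K → Hyperbolic K'.coe)) ∧
    (Fine K → Fine K'.coe) := by
  constructor
  · intro hconn'
    obtain ⟨C, hC1, hup, hdense⟩ :
        ∃ C : ℕ, 1 ≤ C ∧
          (∀ (u w : V) (hu : u ∈ K'.verts) (hw : w ∈ K'.verts),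
            K'.coe.dist ⟨u, hu⟩ ⟨w, hw⟩ ≤ C * K.dist u w) ∧
          (∀ x : V, ∃ u, ∃ _ : u ∈ K'.verts, K.dist x u ≤ 1) := by
      rcases hK' with ⟨a, b, hab, hKe⟩ | ⟨v, hvfin, hKv⟩
      · exact reroute_edge φ hconn hacts a b hKe hconn'
      · exact reroute_vertex φ hconn hacts v hvfin hKv hconn'
    constructor
    · refine ⟨(C : ℝ), 1, by exact_mod_cast hC1, by norm_num, ?_, ?_⟩
      · intro u w
        have htop : (⊤ : K.Subgraph).coe.dist
            ⟨u.1, Set.mem_of_mem_of_subset u.2 (SimpleGraph.Subgraph.verts_mono le_top)⟩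
            ⟨w.1, Set.mem_of_mem_of_subset w.2 (SimpleGraph.Subgraph.verts_mono le_top)⟩
            = K.dist u.1 w.1 := top_dist hconn _ _ _ _
        have hlow : K.dist u.1 w.1 ≤ K'.coe.dist u w :=
          dist_map_le K'.hom (hconn'.preconnected u w)
        have hup2 : K'.coe.dist u w ≤ C * K.dist u.1 w.1 := hup u.1 w.1 u.2 w.2
        constructor
        · rw [htop]
          have hCd : K.dist u.1 w.1 ≤ C * K'.coe.dist u w :=
            le_trans hlow (Nat.le_mul_of_pos_left _ (by omega))
          have hr : (K.dist u.1 w.1 : ℝ) ≤ ((C * K'.coe.dist u w : ℕ) : ℝ) := by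
            exact_mod_cast hCd
          push_cast at hr
          linarith
        · rw [htop]
          have hr : (K'.coe.dist u w : ℝ) ≤ ((C * K.dist u.1 w.1 : ℕ) : ℝ) := by
            exact_mod_cast hup2
          push_cast at hr
          linarith
      · intro x
        obtain ⟨u, hu, hd⟩ := hdense x.1
        refine ⟨⟨u, hu⟩, ?_⟩
        have htop : (⊤ : K.Subgraph).coe.dist x
            ⟨u, Set.mem_of_mem_of_subset hu (SimpleGraph.Subgraph.verts_mono le_top)⟩
            = K.dist x.1 u := top_dist hconn x.1 u x.2 _
        rw [htop]
        exact_mod_cast hd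
    · intro hK
      obtain ⟨δ, h4⟩ := fourpt_of_hyperbolic hK
      have hup' : ∀ a b : ↥K'.verts,
          K'.coe.dist a b ≤ C * K.dist (K'.hom a) (K'.hom b) :=
        fun a b => hup a.1 b.1 a.2 b.2
      exact hyperbolic_of_fourpt
        (RemAux.fourpt_transfer (f := K'.hom) h4 hconn hconn' hC1 hup')
  · intro hf
    exact fine_subgraph K' hf
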